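/- A monounary algebra (A, θ) is ultrahomogeneous if and only if: (a) every connected component of A is ultrahomogeneous, and (b) whenever B, B′ are connected components with |cyc(B)| = |cyc(B′)|, then B ≅ B′ as monounary algebras. -/
import Mathlib

/-- The subalgebra of `(A, θ)` generated by `S`. -/
def cl {A : Type*} (θ : A → A) (S : Set A) : Set A :=
  {a | ∃ s ∈ S, ∃ n : ℕ, θ^[n] s = a}

/-- `f` restricts to an isomorphism from the subalgebra `B` onto the subalgebra `B'`. -/
def IsoOn {A : Type*} (θ : A → A) (B B' : Set A) (f : A → A) : Prop :=
  Set.BijOn f B B' ∧ ∀ a ∈ B, f (θ a) = θ (f a)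

/-- `f` (defined on `B`) extends to an automorphism of `(A, θ)`. -/
def ExtendsToAuto {A : Type*} (θ : A → A) (B : Set A) (f : A → A) : Prop :=
  ∃ g : A → A, Function.Bijective g ∧ (∀ a, g (θ a) = θ (g a)) ∧ ∀ a ∈ B, g a = f a

/-- The connected component of `x`. -/
def comp {A : Type*} (θ : A → A) (x : A) : Set A :=
  {y | ∃ n m : ℕ, θ^[n] x = θ^[m] y}

/-- The component `C` is ultrahomogeneous as a monounary algebra in its own right. -/
def UHOn {A : Type*} (θ : A → A) (C : Set A) : Prop :=
  ∀ S T : Set A, S.Finite → T.Finite → S ⊆ C → T ⊆ C → ∀ f : A → A,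
    IsoOn θ (cl θ S) (cl θ T) f →
      ∃ g : A → A, Set.BijOn g C C ∧ (∀ a ∈ C, g (θ a) = θ (g a)) ∧
        ∀ a ∈ cl θ S, g a = f a

namespace MU
variable {A : Type*} {θ : A → A}

lemma subset_cl {S : Set A} : S ⊆ cl θ S := fun s hs => ⟨s, hs, 0, rfl⟩

lemma cl_theta {S : Set A} {a : A} (h : a ∈ cl θ S) : θ a ∈ cl θ S := by
  obtain ⟨s, hs, n, rfl⟩ := h
  exact ⟨s, hs, n + 1, (Function.iterate_succ_apply' θ n s)⟩

lemma cl_iter {S : Set A} {a : A} (h : a ∈ cl θ S) (m : ℕ) : θ^[m] a ∈ cl θ S := by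
  induction m with
  | zero => exact h
  | succ k ih => rw [Function.iterate_succ_apply']; exact cl_theta ih

lemma comp_refl (x : A) : x ∈ comp θ x := ⟨0, 0, rfl⟩

lemma comp_symm {x y : A} (h : y ∈ comp θ x) : x ∈ comp θ y := by
  obtain ⟨n, m, e⟩ := h; exact ⟨m, n, e.symm⟩

lemma comp_trans {x y z : A} (h1 : y ∈ comp θ x) (h2 : z ∈ comp θ y) : z ∈ comp θ x := by
  obtain ⟨n, m, e1⟩ := h1; obtain ⟨p, q, e2⟩ := h2
  refine ⟨n + p, m + q, ?_⟩
  calc θ^[n+p] x = θ^[p] (θ^[n] x) := by rw [add_comm, Function.iterate_add_apply]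
    _ = θ^[p] (θ^[m] y) := by rw [e1]
    _ = θ^[m] (θ^[p] y) := by rw [← Function.iterate_add_apply, add_comm,
        Function.iterate_add_apply]
    _ = θ^[m] (θ^[q] z) := by rw [e2]
    _ = θ^[m+q] z := by rw [Function.iterate_add_apply]

lemma comp_eq {x y : A} (h : y ∈ comp θ x) : comp θ y = comp θ x :=
  Set.ext fun z => ⟨fun hz => comp_trans h hz, fun hz => comp_trans (comp_symm h) hz⟩

lemma theta_mem_comp (y : A) : θ y ∈ comp θ y := ⟨1, 0, rfl⟩

lemma comp_theta {x y : A} (h : y ∈ comp θ x) : θ y ∈ comp θ x :=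
  comp_trans h (theta_mem_comp y)

lemma iter_mem_comp (y : A) (n : ℕ) : θ^[n] y ∈ comp θ y := ⟨n, 0, rfl⟩

lemma comp_iter {x y : A} (h : y ∈ comp θ x) (n : ℕ) : θ^[n] y ∈ comp θ x :=
  comp_trans h (iter_mem_comp y n)

lemma cl_subset_comp {S : Set A} {x : A} (hS : S ⊆ comp θ x) : cl θ S ⊆ comp θ x := by
  rintro a ⟨s, hs, n, rfl⟩; exact comp_iter (hS hs) n

/-- commuting on a θ-closed set extends to iterates -/
lemma commute_iter {B : Set A} {f : A → A} (hB : ∀ a ∈ B, θ a ∈ B)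
    (hf : ∀ a ∈ B, f (θ a) = θ (f a)) :
    ∀ (n : ℕ) (a : A), a ∈ B → f (θ^[n] a) = θ^[n] (f a) := by
  intro n
  induction n with
  | zero => intro a _; rfl
  | succ k ih =>
    intro a ha
    rw [Function.iterate_succ_apply', Function.iterate_succ_apply']
    have hBk : θ^[k] a ∈ B := by
      clear hf ih; induction k with
      | zero => exact ha
      | succ j ihj => rw [Function.iterate_succ_apply']; exact hB _ ihj
    rw [hf _ hBk, ih a ha]

lemma iter_mem_closed {B : Set A} (hB : ∀ a ∈ B, θ a ∈ B) {a : A} (ha : a ∈ B) (n : ℕ) :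
    θ^[n] a ∈ B := by
  induction n with
  | zero => exact ha
  | succ k ih => rw [Function.iterate_succ_apply']; exact hB _ ih

lemma commute_iter_global {g : A → A} (hg : ∀ a, g (θ a) = θ (g a)) (n : ℕ) (a : A) :
    g (θ^[n] a) = θ^[n] (g a) :=
  commute_iter (B := Set.univ) (fun _ _ => Set.mem_univ _) (fun a _ => hg a) n a (Set.mem_univ a)

/-- a bijective endomorphism maps components onto components -/
lemma image_comp_eq {g : A → A} (hbij : Function.Bijective g)
    (hg : ∀ a, g (θ a) = θ (g a)) (x : A) : g '' comp θ x = comp θ (g x) := by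
  ext z
  constructor
  · rintro ⟨y, ⟨n, m, e⟩, rfl⟩
    exact ⟨n, m, by rw [← commute_iter_global hg, ← commute_iter_global hg, e]⟩
  · rintro ⟨n, m, e⟩
    obtain ⟨y, rfl⟩ := hbij.2 z
    refine ⟨y, ⟨n, m, hbij.1 ?_⟩, rfl⟩
    rw [commute_iter_global hg, commute_iter_global hg, e]

/-- f commuting on θ-closed B preserves the component relation -/
lemma rel_map {B : Set A} {f : A → A} (hB : ∀ a ∈ B, θ a ∈ B)
    (hf : ∀ a ∈ B, f (θ a) = θ (f a)) {a b : A} (ha : a ∈ B) (hb : b ∈ B)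
    (hab : b ∈ comp θ a) : f b ∈ comp θ (f a) := by
  obtain ⟨n, m, e⟩ := hab
  exact ⟨n, m, by rw [← commute_iter hB hf n a ha, ← commute_iter hB hf m b hb, e]⟩

end MU
namespace MU
variable {A : Type*} {θ : A → A}

/-- if no element of comp x is cyclic, the orbit of x is injective -/
lemma orbit_inj (h : ∀ z ∈ comp θ x, ¬ (∃ k ≥ 1, θ^[k] z = z)) :
    Function.Injective (fun n : ℕ => θ^[n] x) := by
  intro n m e
  by_contra hne
  wlog hlt : n < m generalizing n m
  · exact this e.symm (Ne.symm hne) (by omega)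
  exact h (θ^[n] x) (iter_mem_comp x n)
    ⟨m - n, by omega, by
      rw [← Function.iterate_add_apply, Nat.sub_add_cancel hlt.le]
      simpa using e.symm⟩

lemma mem_cl_singleton {x a : A} : a ∈ cl θ {x} ↔ ∃ n, θ^[n] x = a := by
  constructor
  · rintro ⟨s, hs, n, rfl⟩; rw [Set.mem_singleton_iff] at hs; exact ⟨n, by rw [hs]⟩
  · rintro ⟨n, rfl⟩; exact ⟨x, rfl, n, rfl⟩

/-- cyclic set of a component containing a periodic point z equals image of Iio (minimalPeriod) -/
lemma cyc_comp_eq {z : A} (hz : z ∈ Function.periodicPts θ) :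
    {u | (∃ k ≥ 1, θ^[k] u = u) ∧ u ∈ comp θ z}
      = (fun i => θ^[i] z) '' Set.Iio (Function.minimalPeriod θ z) := by
  have hk : 0 < Function.minimalPeriod θ z := Function.minimalPeriod_pos_of_mem_periodicPts hz
  ext u
  constructor
  · rintro ⟨⟨p, hp, hpe⟩, n, m, e⟩
    have h1 : θ^[p * m] u = u := by
      have : Function.IsPeriodicPt θ p u := hpe
      exact (this.mul_const m).eq
    have h2 : u = θ^[p * m - m + n] z := by
      have hmle : m ≤ p * m := Nat.le_mul_of_pos_left m hp
      calc u = θ^[p * m] u := h1.symm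
        _ = θ^[p * m - m] (θ^[m] u) := by
            rw [← Function.iterate_add_apply, Nat.sub_add_cancel hmle]
        _ = θ^[p * m - m] (θ^[n] z) := by rw [← e]
        _ = θ^[p * m - m + n] z := by rw [Function.iterate_add_apply]
    refine ⟨(p * m - m + n) % Function.minimalPeriod θ z, Nat.mod_lt _ hk, ?_⟩
    show θ^[(p * m - m + n) % Function.minimalPeriod θ z] z = u
    rw [Function.iterate_mod_minimalPeriod_eq, ← h2]
  · rintro ⟨i, _, rfl⟩
    refine ⟨⟨Function.minimalPeriod θ z, hk, ?_⟩, comp_iter (comp_refl z) i⟩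
    exact ((Function.isPeriodicPt_minimalPeriod θ z).apply_iterate i).eq

lemma cyc_card_eq {z : A} (hz : z ∈ Function.periodicPts θ) :
    Cardinal.mk {u | (∃ k ≥ 1, θ^[k] u = u) ∧ u ∈ comp θ z}
      = Function.minimalPeriod θ z := by
  rw [cyc_comp_eq hz]
  have h1 := Cardinal.mk_image_eq_of_injOn_lift (fun i => θ^[i] z)
    (Set.Iio (Function.minimalPeriod θ z)) Function.iterate_injOn_Iio_minimalPeriod
  rw [Cardinal.lift_uzero] at h1
  have h2 : Cardinal.mk (Set.Iio (Function.minimalPeriod θ z))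
      = (Function.minimalPeriod θ z : Cardinal) := by
    simp [Cardinal.mk_fintype]
  rw [h1, h2, Cardinal.lift_natCast]

/-- iterate of f is injective on orbit-generated cl when cyclic points behave -/
lemma mem_periodicPts_iff {z : A} :
    z ∈ Function.periodicPts θ ↔ ∃ k ≥ 1, θ^[k] z = z := by
  constructor
  · rintro ⟨n, hn, he⟩; exact ⟨n, hn, he.eq⟩
  · rintro ⟨k, hk, he⟩; exact ⟨k, hk, he⟩

end MU
namespace MU
variable {A : Type*} {θ : A → A}

lemma forward_a
    (H : ∀ S T : Set A, S.Finite → T.Finite → ∀ f : A → A,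
        IsoOn θ (cl θ S) (cl θ T) f → ExtendsToAuto θ (cl θ S) f)
    (x : A) : UHOn θ (comp θ x) := by
  intro S T hSfin hTfin hSsub hTsub f hiso
  rcases Set.eq_empty_or_nonempty (cl θ S) with hemp | ⟨a, ha⟩
  · exact ⟨id, ⟨fun _ h => h, fun _ _ _ _ h => h, fun b hb => ⟨b, hb, rfl⟩⟩,
      fun _ _ => rfl, fun a ha => by rw [hemp] at ha; exact absurd ha (Set.notMem_empty a)⟩
  · obtain ⟨g, hgbij, hgcomm, hgext⟩ := H S T hSfin hTfin f hiso
    have hax : a ∈ comp θ x := cl_subset_comp hSsub ha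
    have hga : g a ∈ comp θ x := by
      rw [hgext a ha]
      exact cl_subset_comp hTsub (hiso.1.1 ha)
    have himg : g '' comp θ x = comp θ x := by
      rw [← comp_eq hax, image_comp_eq hgbij hgcomm, comp_eq (comp_eq hax ▸ hga)]
    refine ⟨g, ⟨?_, fun _ _ _ _ h => hgbij.1 h, ?_⟩, fun b _ => hgcomm b, hgext⟩
    · intro b hb
      have h1 : g b ∈ g '' comp θ x := ⟨b, hb, rfl⟩
      rwa [himg] at h1
    · intro b hb
      rw [himg]; exact hb

lemma forward_b
    (H : ∀ S T : Set A, S.Finite → T.Finite → ∀ f : A → A,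
        IsoOn θ (cl θ S) (cl θ T) f → ExtendsToAuto θ (cl θ S) f)
    (x y : A)
    (hc : Cardinal.mk {z | (∃ k ≥ 1, θ^[k] z = z) ∧ z ∈ comp θ x}
        = Cardinal.mk {z | (∃ k ≥ 1, θ^[k] z = z) ∧ z ∈ comp θ y}) :
    ∃ f : A → A, Set.BijOn f (comp θ x) (comp θ y) ∧
      ∀ a ∈ comp θ x, f (θ a) = θ (f a) := by
  by_cases hcx : ∃ z, ((∃ k ≥ 1, θ^[k] z = z) ∧ z ∈ comp θ x)
  · -- cyclic case
    obtain ⟨z, hzc, hzx⟩ := hcx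
    have hzp : z ∈ Function.periodicPts θ := mem_periodicPts_iff.2 hzc
    set k := Function.minimalPeriod θ z with hkdef
    have hk : 0 < k := Function.minimalPeriod_pos_of_mem_periodicPts hzp
    have hcx' : Cardinal.mk {u | (∃ k ≥ 1, θ^[k] u = u) ∧ u ∈ comp θ x} = (k : Cardinal) := by
      rw [show comp θ x = comp θ z from (comp_eq hzx).symm]
      exact cyc_card_eq hzp
    -- the other side is nonempty
    have hne : Nonempty {u | (∃ k ≥ 1, θ^[k] u = u) ∧ u ∈ comp θ y} := by
      rw [← Cardinal.mk_ne_zero_iff, ← hc, hcx']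
      exact_mod_cast hk.ne'
    obtain ⟨w, hwc, hwy⟩ := hne
    have hwp : w ∈ Function.periodicPts θ := mem_periodicPts_iff.2 hwc
    set l := Function.minimalPeriod θ w with hldef
    have hcy' : Cardinal.mk {u | (∃ k ≥ 1, θ^[k] u = u) ∧ u ∈ comp θ y} = (l : Cardinal) := by
      rw [show comp θ y = comp θ w from (comp_eq hwy).symm]
      exact cyc_card_eq hwp
    have hkl : k = l := by
      have : (k : Cardinal) = (l : Cardinal) := by rw [← hcx', ← hcy', hc]
      exact_mod_cast this
    -- the map on orbits
    have key : ∀ n m : ℕ, θ^[n] z = θ^[m] z → θ^[n] w = θ^[m] w := by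
      intro n m e
      have e2 : θ^[n % k] z = θ^[m % k] z := by
        rw [hkdef, Function.iterate_mod_minimalPeriod_eq,
          Function.iterate_mod_minimalPeriod_eq]; exact e
      have e3 : n % k = m % k :=
        Function.iterate_injOn_Iio_minimalPeriod (Set.mem_Iio.2 (Nat.mod_lt _ hk))
          (Set.mem_Iio.2 (Nat.mod_lt _ hk)) e2
      rw [← Function.iterate_mod_minimalPeriod_eq (n := n), ← hldef, ← hkl,
        ← Function.iterate_mod_minimalPeriod_eq (n := m), ← hldef, ← hkl, e3]
    have keyw : ∀ n m : ℕ, θ^[n] w = θ^[m] w → θ^[n] z = θ^[m] z := by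
      intro n m e
      have e2 : θ^[n % l] w = θ^[m % l] w := by
        rw [hldef, Function.iterate_mod_minimalPeriod_eq,
          Function.iterate_mod_minimalPeriod_eq]; exact e
      have hl : 0 < l := hkl ▸ hk
      have e3 : n % l = m % l :=
        Function.iterate_injOn_Iio_minimalPeriod
          (Set.mem_Iio.2 (Nat.mod_lt _ hl)) (Set.mem_Iio.2 (Nat.mod_lt _ hl)) e2
      rw [← Function.iterate_mod_minimalPeriod_eq (n := n), ← hkdef, hkl,
        ← Function.iterate_mod_minimalPeriod_eq (n := m), ← hkdef, hkl, e3]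
    classical
    set f : A → A := fun a => if h : ∃ n, θ^[n] z = a then θ^[h.choose] w else a with hfdef
    have hf : ∀ n : ℕ, f (θ^[n] z) = θ^[n] w := by
      intro n
      have hex : ∃ m, θ^[m] z = θ^[n] z := ⟨n, rfl⟩
      have : f (θ^[n] z) = θ^[hex.choose] w := by rw [hfdef]; simp only [dif_pos hex]
      rw [this, key _ _ hex.choose_spec]
    have hiso : IsoOn θ (cl θ {z}) (cl θ {w}) f := by
      constructor
      · refine ⟨?_, ?_, ?_⟩
        · intro a ha
          obtain ⟨n, rfl⟩ := mem_cl_singleton.1 ha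
          rw [hf n]; exact mem_cl_singleton.2 ⟨n, rfl⟩
        · intro a ha b hb e
          obtain ⟨n, rfl⟩ := mem_cl_singleton.1 ha
          obtain ⟨m, rfl⟩ := mem_cl_singleton.1 hb
          rw [hf n, hf m] at e
          exact keyw n m e
        · intro b hb
          obtain ⟨n, rfl⟩ := mem_cl_singleton.1 hb
          exact ⟨θ^[n] z, mem_cl_singleton.2 ⟨n, rfl⟩, hf n⟩
      · intro a ha
        obtain ⟨n, rfl⟩ := mem_cl_singleton.1 ha
        have h1 : θ (θ^[n] z) = θ^[n+1] z := (Function.iterate_succ_apply' θ n z).symm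
        have h2 : θ (θ^[n] w) = θ^[n+1] w := (Function.iterate_succ_apply' θ n w).symm
        rw [h1, hf (n+1), hf n, h2]
    obtain ⟨g, hgbij, hgcomm, hgext⟩ :=
      H {z} {w} (Set.finite_singleton z) (Set.finite_singleton w) f hiso
    have hgz : g z = w := by
      have := hgext z (subset_cl rfl)
      rw [this, show z = θ^[0] z from rfl, hf 0]
      simp
    have himg : g '' comp θ x = comp θ y := by
      rw [← comp_eq hzx, image_comp_eq hgbij hgcomm, hgz, comp_eq hwy]
    refine ⟨g, ⟨?_, fun _ _ _ _ h => hgbij.1 h, ?_⟩, fun b _ => hgcomm b⟩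
    · intro b hb
      have h1 : g b ∈ g '' comp θ x := ⟨b, hb, rfl⟩
      rwa [himg] at h1
    · intro b hb
      rw [himg]; exact hb
  · -- acyclic case
    have hcy : ¬ ∃ z, ((∃ k ≥ 1, θ^[k] z = z) ∧ z ∈ comp θ y) := by
      intro hne
      have h0 : Cardinal.mk {z | (∃ k ≥ 1, θ^[k] z = z) ∧ z ∈ comp θ x} ≠ 0 := by
        rw [hc, Cardinal.mk_ne_zero_iff]
        obtain ⟨z, hz⟩ := hne; exact ⟨⟨z, hz⟩⟩
      rw [Cardinal.mk_ne_zero_iff] at h0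
      obtain ⟨⟨z, hz⟩⟩ := h0
      exact hcx ⟨z, hz⟩
    have hxinj : Function.Injective (fun n : ℕ => θ^[n] x) :=
      orbit_inj (fun z hz hcz => hcx ⟨z, hcz, hz⟩)
    have hyinj : Function.Injective (fun n : ℕ => θ^[n] y) :=
      orbit_inj (fun z hz hcz => hcy ⟨z, hcz, hz⟩)
    classical
    set f : A → A := fun a => if h : ∃ n, θ^[n] x = a then θ^[h.choose] y else a with hfdef
    have hf : ∀ n : ℕ, f (θ^[n] x) = θ^[n] y := by
      intro n
      have hex : ∃ m, θ^[m] x = θ^[n] x := ⟨n, rfl⟩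
      have h1 : f (θ^[n] x) = θ^[hex.choose] y := by rw [hfdef]; simp only [dif_pos hex]
      have h2 : hex.choose = n := hxinj hex.choose_spec
      rw [h1, h2]
    have hiso : IsoOn θ (cl θ {x}) (cl θ {y}) f := by
      constructor
      · refine ⟨?_, ?_, ?_⟩
        · intro a ha
          obtain ⟨n, rfl⟩ := mem_cl_singleton.1 ha
          rw [hf n]; exact mem_cl_singleton.2 ⟨n, rfl⟩
        · intro a ha b hb e
          obtain ⟨n, rfl⟩ := mem_cl_singleton.1 ha
          obtain ⟨m, rfl⟩ := mem_cl_singleton.1 hb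
          rw [hf n, hf m] at e
          rw [hyinj e]
        · intro b hb
          obtain ⟨n, rfl⟩ := mem_cl_singleton.1 hb
          exact ⟨θ^[n] x, mem_cl_singleton.2 ⟨n, rfl⟩, hf n⟩
      · intro a ha
        obtain ⟨n, rfl⟩ := mem_cl_singleton.1 ha
        have h1 : θ (θ^[n] x) = θ^[n+1] x := (Function.iterate_succ_apply' θ n x).symm
        have h2 : θ (θ^[n] y) = θ^[n+1] y := (Function.iterate_succ_apply' θ n y).symm
        rw [h1, hf (n+1), hf n, h2]
    obtain ⟨g, hgbij, hgcomm, hgext⟩ :=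
      H {x} {y} (Set.finite_singleton x) (Set.finite_singleton y) f hiso
    have hgx : g x = y := by
      have := hgext x (subset_cl rfl)
      rw [this, show x = θ^[0] x from rfl, hf 0]
      simp
    have himg : g '' comp θ x = comp θ y := by
      rw [image_comp_eq hgbij hgcomm, hgx]
    refine ⟨g, ⟨?_, fun _ _ _ _ h => hgbij.1 h, ?_⟩, fun b _ => hgcomm b⟩
    · intro b hb
      have h1 : g b ∈ g '' comp θ x := ⟨b, hb, rfl⟩
      rwa [himg] at h1
    · intro b hb
      rw [himg]; exact hb

end MU
namespace MU
variable {A : Type*} {θ : A → A}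

def crel (θ : A → A) : Setoid A :=
  ⟨fun a b => b ∈ comp θ a, ⟨comp_refl, comp_symm, fun h1 h2 => comp_trans h1 h2⟩⟩

def cset (θ : A → A) (q : Quotient (crel θ)) : Set A := comp θ q.out

lemma qmk_eq_iff {a b : A} :
    Quotient.mk (crel θ) a = Quotient.mk (crel θ) b ↔ b ∈ comp θ a :=
  ⟨fun h => Quotient.exact h, fun h => Quotient.sound h⟩

lemma mem_cset_mk (a : A) : a ∈ cset θ (Quotient.mk (crel θ) a) :=
  @Quotient.mk_out A (crel θ) a

lemma cset_eq_comp (a : A) : cset θ (Quotient.mk (crel θ) a) = comp θ a :=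
  comp_eq (comp_symm (mem_cset_mk a))

lemma eq_mk_of_mem_cset {q : Quotient (crel θ)} {a : A} (h : a ∈ cset θ q) :
    q = Quotient.mk (crel θ) a := by
  have h2 : Quotient.mk (crel θ) q.out = Quotient.mk (crel θ) a := Quotient.sound h
  rw [Quotient.out_eq] at h2; exact h2

lemma cset_theta {q : Quotient (crel θ)} {a : A} (h : a ∈ cset θ q) : θ a ∈ cset θ q :=
  comp_theta h

/-- image of a generated subalgebra under a commuting map -/
lemma image_cl {D : Set A} {e : A → A} (hcomm : ∀ b ∈ D, e (θ b) = θ (e b))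
    (hD : ∀ b ∈ D, θ b ∈ D) {V : Set A} (hV : V ⊆ D) : e '' cl θ V = cl θ (e '' V) := by
  ext b
  constructor
  · rintro ⟨a, ⟨v, hv, n, rfl⟩, rfl⟩
    exact ⟨e v, ⟨v, hv, rfl⟩, n, (commute_iter hD hcomm n v (hV hv)).symm⟩
  · rintro ⟨w, ⟨v, hv, rfl⟩, n, rfl⟩
    exact ⟨θ^[n] v, ⟨v, hv, n, rfl⟩, commute_iter hD hcomm n v (hV hv)⟩

/-- inverse of an isomorphism between θ-closed sets -/
lemma inv_iso [Nonempty A] {D D' : Set A} {h : A → A} (hb : Set.BijOn h D D')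
    (hcomm : ∀ a ∈ D, h (θ a) = θ (h a)) (hD : ∀ a ∈ D, θ a ∈ D) :
    Set.BijOn (Function.invFunOn h D) D' D ∧
      (∀ b ∈ D', Function.invFunOn h D (θ b) = θ (Function.invFunOn h D b)) ∧
      Set.InvOn (Function.invFunOn h D) h D D' := by
  have hinvon : Set.InvOn (Function.invFunOn h D) h D D' := hb.invOn_invFunOn
  have hmaps : Set.MapsTo (Function.invFunOn h D) D' D := hb.surjOn.mapsTo_invFunOn
  have hbij : Set.BijOn (Function.invFunOn h D) D' D := by
    refine ⟨hmaps, ?_, ?_⟩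
    · intro b hb1 b' hb2 e
      have := congrArg h e
      rwa [hinvon.2 hb1, hinvon.2 hb2] at this
    · intro a ha
      exact ⟨h a, hb.1 ha, hinvon.1 ha⟩
  refine ⟨hbij, ?_, hinvon⟩
  intro b hbD'
  obtain ⟨a, haD, rfl⟩ := hb.surjOn hbD'
  rw [← hcomm a haD, hinvon.1 (hD a haD), hinvon.1 haD]

end MU
namespace MU
variable {A : Type*} {θ : A → A}

lemma cyclic_reach {u v : A} (hc : ∃ k ≥ 1, θ^[k] u = u) (h : u ∈ comp θ v) :
    ∃ c, θ^[c] v = u := by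
  obtain ⟨p, hp, hpe⟩ := hc
  obtain ⟨n, m, e⟩ := h
  refine ⟨p * m - m + n, ?_⟩
  have hmle : m ≤ p * m := Nat.le_mul_of_pos_left m hp
  have h1 : θ^[p * m] u = u := (show Function.IsPeriodicPt θ p u from hpe).mul_const m
  calc θ^[p * m - m + n] v = θ^[p * m - m] (θ^[n] v) := Function.iterate_add_apply θ _ n v
    _ = θ^[p * m - m] (θ^[m] u) := by rw [e]
    _ = θ^[p * m] u := by rw [← Function.iterate_add_apply, Nat.sub_add_cancel hmle]
    _ = u := h1

lemma cyc_mem_cl {S : Set A} {v u : A} (hv : v ∈ cl θ S) (hc : ∃ k ≥ 1, θ^[k] u = u)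
    (h : u ∈ comp θ v) : u ∈ cl θ S := by
  obtain ⟨c, rfl⟩ := cyclic_reach hc h
  exact cl_iter hv c

lemma cyclic_map {B : Set A} {f : A → A} (hB : ∀ a ∈ B, θ a ∈ B)
    (hcomm : ∀ a ∈ B, f (θ a) = θ (f a)) {u : A} (hu : u ∈ B)
    (hc : ∃ k ≥ 1, θ^[k] u = u) : ∃ k ≥ 1, θ^[k] (f u) = f u := by
  obtain ⟨k, hk, he⟩ := hc
  exact ⟨k, hk, by rw [← commute_iter hB hcomm k u hu, he]⟩

end MU
namespace MU

lemma fiber_match {Q : Type*} {ν : Q → Cardinal} {CS CT : Set Q} {φ : Q → Q}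
    (hCS : CS.Finite)
    (hmaps : ∀ q ∈ CS, φ q ∈ CT)
    (hinj : ∀ q ∈ CS, ∀ q' ∈ CS, φ q = φ q' → q = q')
    (hsurj : ∀ q' ∈ CT, ∃ q ∈ CS, φ q = q')
    (hν : ∀ q ∈ CS, ν (φ q) = ν q) :
    ∃ Φ : Q → Q, Function.Bijective Φ ∧ (∀ q ∈ CS, Φ q = φ q) ∧ ∀ q, ν (Φ q) = ν q := by
  classical
  have hfib : ∀ c, Cardinal.mk {q | q ∉ CS ∧ ν q = c} = Cardinal.mk {q | q ∉ CT ∧ ν q = c} := by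
    intro c
    have h1 : {q | q ∉ CS ∧ ν q = c} = {q | ν q = c} \ {q | q ∈ CS ∧ ν q = c} := by
      ext q; simp only [Set.mem_setOf_eq, Set.mem_diff]; tauto
    have h2 : {q | q ∉ CT ∧ ν q = c} = {q | ν q = c} \ {q | q ∈ CT ∧ ν q = c} := by
      ext q; simp only [Set.mem_setOf_eq, Set.mem_diff]; tauto
    have hsub1 : {q | q ∈ CS ∧ ν q = c} ⊆ {q | ν q = c} := fun q h => h.2
    have hsub2 : {q | q ∈ CT ∧ ν q = c} ⊆ {q | ν q = c} := fun q h => h.2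
    have e1 := Cardinal.mk_diff_add_mk hsub1
    have e2 := Cardinal.mk_diff_add_mk hsub2
    have hbij : Set.BijOn φ {q | q ∈ CS ∧ ν q = c} {q | q ∈ CT ∧ ν q = c} := by
      refine ⟨fun q hq => ⟨hmaps q hq.1, (hν q hq.1).trans hq.2⟩,
        fun q hq q' hq' e => hinj q hq.1 q' hq'.1 e, ?_⟩
      intro q' hq'
      obtain ⟨q, hq, rfl⟩ := hsurj q' hq'.1
      exact ⟨q, ⟨hq, by rw [← hν q hq]; exact hq'.2⟩, rfl⟩
    have hYeq : Cardinal.mk {q | q ∈ CS ∧ ν q = c} = Cardinal.mk {q | q ∈ CT ∧ ν q = c} :=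
      Cardinal.mk_congr (Set.BijOn.equiv φ hbij)
    have hfin : {q | q ∈ CS ∧ ν q = c}.Finite := hCS.subset fun q h => h.1
    obtain ⟨n, hn⟩ := Cardinal.lt_aleph0.1 hfin.lt_aleph0
    have e3 : Cardinal.mk ({q | ν q = c} \ {q | q ∈ CS ∧ ν q = c} : Set Q) + n
        = Cardinal.mk ({q | ν q = c} \ {q | q ∈ CT ∧ ν q = c} : Set Q) + n := by
      rw [← hn, e1, hYeq, e2]
    have e4 := (Cardinal.add_nat_inj n).1 e3
    rw [h1, h2]; exact e4
  have hE : ∀ c, Nonempty ({q | q ∉ CS ∧ ν q = c} ≃ {q | q ∉ CT ∧ ν q = c}) :=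
    fun c => Cardinal.eq.1 (hfib c)
  set E := fun c => (hE c).some with hEdef
  have hEprop : ∀ c x, ((E c) x).1 ∉ CT ∧ ν ((E c) x).1 = c := fun c x => ((E c) x).2
  have aux : ∀ (c : Cardinal) (q : Q) (h1 : q ∉ CS) (h2 : ν q = c),
      ((E (ν q)) ⟨q, h1, rfl⟩).1 = ((E c) ⟨q, h1, h2⟩).1 := by
    intro c q h1 h2; subst h2; rfl
  set Φ : Q → Q := fun q => if h : q ∈ CS then φ q else ((E (ν q)) ⟨q, h, rfl⟩).1 with hΦdef
  refine ⟨Φ, ⟨?_, ?_⟩, ?_, ?_⟩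
  · -- injective
    intro q q' e
    simp only [hΦdef] at e
    by_cases h : q ∈ CS <;> by_cases h' : q' ∈ CS
    · rw [dif_pos h, dif_pos h'] at e; exact hinj q h q' h' e
    · rw [dif_pos h, dif_neg h'] at e
      exact absurd (e ▸ hmaps q h) (hEprop (ν q') ⟨q', h', rfl⟩).1
    · rw [dif_neg h, dif_pos h'] at e
      exact absurd (e ▸ hmaps q' h') (hEprop (ν q) ⟨q, h, rfl⟩).1
    · rw [dif_neg h, dif_neg h'] at e
      have hq1 : ν ((E (ν q)) ⟨q, h, rfl⟩).1 = ν q := (hEprop _ _).2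
      have hq2 : ν ((E (ν q')) ⟨q', h', rfl⟩).1 = ν q' := (hEprop _ _).2
      have hνe : ν q = ν q' := by rw [← hq1, ← hq2, e]
      rw [aux (ν q') q h hνe] at e
      have h5 := (E (ν q')).injective (Subtype.ext e)
      exact congrArg Subtype.val h5
  · -- surjective
    intro y
    by_cases hy : y ∈ CT
    · obtain ⟨q, hq, he⟩ := hsurj y hy
      exact ⟨q, by simp only [hΦdef]; rw [dif_pos hq]; exact he⟩
    · set p := (E (ν y)).symm ⟨y, hy, rfl⟩ with hpdef
      refine ⟨p.1, ?_⟩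
      simp only [hΦdef]
      rw [dif_neg p.2.1, aux (ν y) p.1 p.2.1 p.2.2]
      have h6 : (E (ν y)) ⟨p.1, p.2.1, p.2.2⟩ = ⟨y, hy, rfl⟩ := by
        have hp : (⟨p.1, p.2.1, p.2.2⟩ : {q | q ∉ CS ∧ ν q = ν y}) = p := rfl
        rw [hp, hpdef]
        exact (E (ν y)).apply_symm_apply _
      rw [h6]
  · intro q hq
    simp only [hΦdef]
    exact dif_pos hq
  · intro q
    simp only [hΦdef]
    by_cases h : q ∈ CS
    · rw [dif_pos h]; exact hν q h
    · rw [dif_neg h]; exact (hEprop _ _).2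

end MU
namespace MU
variable {A : Type*} {θ : A → A}

lemma backward
    (hU : ∀ x : A, UHOn θ (comp θ x))
    (hI : ∀ x y : A, Cardinal.mk {z | (∃ k ≥ 1, θ^[k] z = z) ∧ z ∈ comp θ x}
        = Cardinal.mk {z | (∃ k ≥ 1, θ^[k] z = z) ∧ z ∈ comp θ y} →
        ∃ f : A → A, Set.BijOn f (comp θ x) (comp θ y) ∧ ∀ a ∈ comp θ x, f (θ a) = θ (f a))
    {S T : Set A} (hS : S.Finite) (hT : T.Finite) {f : A → A}
    (hiso : IsoOn θ (cl θ S) (cl θ T) f) : ExtendsToAuto θ (cl θ S) f := by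
  classical
  rcases isEmpty_or_nonempty A with hA | hA
  · exact ⟨id, Function.bijective_id, fun a => rfl, fun a _ => (hA.false a).elim⟩
  have hfm : Set.MapsTo f (cl θ S) (cl θ T) := hiso.1.1
  have hfinj := hiso.1.2.1
  have hclSc : ∀ a ∈ cl θ S, θ a ∈ cl θ S := fun _ h => cl_theta h
  have hclTc : ∀ a ∈ cl θ T, θ a ∈ cl θ T := fun _ h => cl_theta h
  obtain ⟨hfinvbij, hfinvcomm, hfinvon⟩ := inv_iso hiso.1 hiso.2 hclSc
  set finv := Function.invFunOn f (cl θ S) with hfinvdef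
  have hrel : ∀ a ∈ cl θ S, ∀ b ∈ cl θ S, b ∈ comp θ a → f b ∈ comp θ (f a) :=
    fun a ha b hb hab => rel_map hclSc hiso.2 ha hb hab
  have hrelinv : ∀ a ∈ cl θ T, ∀ b ∈ cl θ T, b ∈ comp θ a → finv b ∈ comp θ (finv a) :=
    fun a ha b hb hab => rel_map hclTc hfinvcomm ha hb hab
  have hmemS : ∀ a ∈ cl θ S, ∃ s ∈ S, a ∈ comp θ s := by
    rintro a ⟨s, hs, n, rfl⟩; exact ⟨s, hs, iter_mem_comp s n⟩
  have hmemT : ∀ a ∈ cl θ T, ∃ t ∈ T, a ∈ comp θ t := by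
    rintro a ⟨t, ht, n, rfl⟩; exact ⟨t, ht, iter_mem_comp t n⟩
  -- the invariant
  set ν : Quotient (crel θ) → Cardinal :=
    fun q => Cardinal.mk {z | (∃ k ≥ 1, θ^[k] z = z) ∧ z ∈ cset θ q} with hνdef
  -- cyclic part is transported by f
  have hcycbij : ∀ s ∈ S,
      Set.BijOn f {z | (∃ k ≥ 1, θ^[k] z = z) ∧ z ∈ comp θ s}
        {z | (∃ k ≥ 1, θ^[k] z = z) ∧ z ∈ comp θ (f s)} := by
    intro s hs
    have hsS : s ∈ cl θ S := subset_cl hs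
    have hfs : f s ∈ cl θ T := hfm hsS
    refine ⟨?_, ?_, ?_⟩
    · rintro u ⟨hcu, hus⟩
      have huS : u ∈ cl θ S := cyc_mem_cl hsS hcu hus
      exact ⟨cyclic_map hclSc hiso.2 huS hcu, hrel s hsS u huS hus⟩
    · intro u hu u' hu' e
      exact hfinj (cyc_mem_cl hsS hu.1 hu.2) (cyc_mem_cl hsS hu'.1 hu'.2) e
    · rintro u' ⟨hcu', hu's⟩
      have hu'T : u' ∈ cl θ T := cyc_mem_cl hfs hcu' hu's
      have h2 : finv u' ∈ comp θ (finv (f s)) := hrelinv (f s) hfs u' hu'T hu's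
      rw [hfinvon.1 hsS] at h2
      exact ⟨finv u', ⟨cyclic_map hclTc hfinvcomm hu'T hcu', h2⟩, hfinvon.2 hu'T⟩
  have hν : ∀ s ∈ S, ν (Quotient.mk (crel θ) (f s)) = ν (Quotient.mk (crel θ) s) := by
    intro s hs
    simp only [hνdef]
    rw [cset_eq_comp, cset_eq_comp]
    exact (Cardinal.mk_congr (Set.BijOn.equiv f (hcycbij s hs))).symm
  -- the finite partial matching φm on components touched by S
  set CS := Quotient.mk (crel θ) '' S with hCSdef
  set CT := Quotient.mk (crel θ) '' T with hCTdef
  have hselE : ∀ q : Quotient (crel θ), q ∈ CS →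
      ∃ s, s ∈ S ∧ Quotient.mk (crel θ) s = q := fun q h => h
  choose sel hsel1 hsel2 using hselE
  set φm : Quotient (crel θ) → Quotient (crel θ) :=
    fun q => if h : q ∈ CS then Quotient.mk (crel θ) (f (sel q h)) else q with hφmdef
  have hφS : ∀ s ∈ S, φm (Quotient.mk (crel θ) s) = Quotient.mk (crel θ) (f s) := by
    intro s hs
    have h : Quotient.mk (crel θ) s ∈ CS := ⟨s, hs, rfl⟩
    simp only [hφmdef]
    rw [dif_pos h]
    have h2 : s ∈ comp θ (sel _ h) := qmk_eq_iff.1 (hsel2 _ h)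
    exact qmk_eq_iff.2 (hrel _ (subset_cl (hsel1 _ h)) _ (subset_cl hs) h2)
  have hφmaps : ∀ q ∈ CS, φm q ∈ CT := by
    rintro q ⟨s, hs, rfl⟩
    rw [hφS s hs]
    obtain ⟨t, ht, hc⟩ := hmemT (f s) (hfm (subset_cl hs))
    exact ⟨t, ht, qmk_eq_iff.2 hc⟩
  have hφinj : ∀ q ∈ CS, ∀ q' ∈ CS, φm q = φm q' → q = q' := by
    rintro q ⟨s, hs, rfl⟩ q' ⟨s', hs', rfl⟩ e
    rw [hφS s hs, hφS s' hs'] at e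
    have h1 : f s' ∈ comp θ (f s) := qmk_eq_iff.1 e
    have h2 : finv (f s') ∈ comp θ (finv (f s)) :=
      hrelinv _ (hfm (subset_cl hs)) _ (hfm (subset_cl hs')) h1
    rw [hfinvon.1 (subset_cl hs), hfinvon.1 (subset_cl hs')] at h2
    exact qmk_eq_iff.2 h2
  have hφsurj : ∀ q' ∈ CT, ∃ q ∈ CS, φm q = q' := by
    rintro q' ⟨t, ht, rfl⟩
    have htT : t ∈ cl θ T := subset_cl ht
    have ha : finv t ∈ cl θ S := hfinvbij.1 htT
    obtain ⟨s, hs, hcs⟩ := hmemS (finv t) ha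
    have h2 : f (finv t) ∈ comp θ (f s) := hrel s (subset_cl hs) _ ha hcs
    rw [hfinvon.2 htT] at h2
    exact ⟨Quotient.mk (crel θ) s, ⟨s, hs, rfl⟩, by rw [hφS s hs]; exact qmk_eq_iff.2 h2⟩
  have hφν : ∀ q ∈ CS, ν (φm q) = ν q := by
    rintro q ⟨s, hs, rfl⟩
    rw [hφS s hs]; exact hν s hs
  have hCSfin : CS.Finite := hS.image (Quotient.mk (crel θ))
  obtain ⟨Φ, hΦbij, hΦCS, hΦν⟩ := fiber_match hCSfin hφmaps hφinj hφsurj hφν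
  have hΦS : ∀ s ∈ S, Φ (Quotient.mk (crel θ) s) = Quotient.mk (crel θ) (f s) := by
    intro s hs
    rw [hΦCS _ ⟨s, hs, rfl⟩, hφS s hs]
  -- the general closure-intersection fact
  have hgen : ∀ (V : Set A) (p : Quotient (crel θ)),
      cl θ V ∩ cset θ p = cl θ (V ∩ cset θ p) := by
    intro V p
    ext a
    constructor
    · rintro ⟨⟨v, hv, n, rfl⟩, haq⟩
      have h2 : p = Quotient.mk (crel θ) (θ^[n] v) := eq_mk_of_mem_cset haq
      have h3 : Quotient.mk (crel θ) v = Quotient.mk (crel θ) (θ^[n] v) :=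
        qmk_eq_iff.2 (iter_mem_comp v n)
      have h4 : v ∈ cset θ p := by rw [h2.trans h3.symm]; exact mem_cset_mk v
      exact ⟨v, ⟨hv, h4⟩, n, rfl⟩
    · rintro ⟨v, ⟨hv, hvq⟩, n, rfl⟩
      exact ⟨⟨v, hv, n, rfl⟩, iter_mem_closed (fun _ hh => cset_theta hh) hvq n⟩
  -- per-component maps
  have key : ∀ q : Quotient (crel θ), ∃ gq : A → A,
      Set.BijOn gq (cset θ q) (cset θ (Φ q)) ∧
      (∀ a ∈ cset θ q, gq (θ a) = θ (gq a)) ∧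
      (∀ a, a ∈ cl θ S → a ∈ cset θ q → gq a = f a) := by
    intro q
    have hνq : ν (Φ q) = ν q := hΦν q
    obtain ⟨h, hhbij, hhcomm⟩ :
        ∃ h : A → A, Set.BijOn h (cset θ q) (cset θ (Φ q)) ∧
          ∀ a ∈ cset θ q, h (θ a) = θ (h a) := by
      apply hI q.out (Φ q).out
      exact hνq.symm
    by_cases hq : q ∈ CS
    · obtain ⟨s, hs, hqs⟩ := hq
      have hCclosed : ∀ a ∈ cset θ q, θ a ∈ cset θ q := fun _ ha => cset_theta ha
      have hC'closed : ∀ a ∈ cset θ (Φ q), θ a ∈ cset θ (Φ q) := fun _ ha => cset_theta ha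
      obtain ⟨hhinvbij, hhinvcomm, hhinvon⟩ := inv_iso hhbij hhcomm hCclosed
      set hinv := Function.invFunOn h (cset θ q) with hhinvdef
      have hsC : s ∈ cset θ q := by rw [← hqs]; exact mem_cset_mk s
      have hΦq : Φ q = Quotient.mk (crel θ) (f s) := by rw [← hqs]; exact hΦS s hs
      have hfsC' : f s ∈ cset θ (Φ q) := by rw [hΦq]; exact mem_cset_mk (f s)
      have hCs : cset θ q = comp θ s := by rw [← hqs, cset_eq_comp]
      have hC's : cset θ (Φ q) = comp θ (f s) := by rw [hΦq, cset_eq_comp]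
      -- f maps cl S ∩ C bijectively to cl T ∩ C'
      have hclaim2 : Set.BijOn f (cl θ S ∩ cset θ q) (cl θ T ∩ cset θ (Φ q)) := by
        refine ⟨?_, fun a ha b hb e => hfinj ha.1 hb.1 e, ?_⟩
        · rintro a ⟨haS, haq⟩
          refine ⟨hfm haS, ?_⟩
          have h1 : a ∈ comp θ s := hCs ▸ haq
          have h2 : f a ∈ comp θ (f s) := hrel s (subset_cl hs) a haS h1
          rw [hC's]; exact h2
        · rintro b ⟨hbT, hbq'⟩
          have hb1 : finv b ∈ cl θ S := hfinvbij.1 hbT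
          obtain ⟨s', hs', hcs'⟩ := hmemS (finv b) hb1
          have hfb : f (finv b) = b := hfinvon.2 hbT
          have h2 : f (finv b) ∈ comp θ (f s') := hrel s' (subset_cl hs') _ hb1 hcs'
          rw [hfb] at h2
          have h3 : Φ (Quotient.mk (crel θ) s') = Φ q := by
            rw [hΦS s' hs']
            rw [eq_mk_of_mem_cset hbq']
            exact qmk_eq_iff.2 h2
          have h4 : Quotient.mk (crel θ) s' = q := hΦbij.1 h3
          refine ⟨finv b, ⟨hb1, ?_⟩, hfb⟩
          rw [← h4, cset_eq_comp]; exact hcs'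
      set W := hinv '' (T ∩ cset θ (Φ q)) with hWdef
      have hWfin : W.Finite := (hT.inter_of_left _).image _
      have hWC : W ⊆ cset θ q := by rintro w ⟨b, hb, rfl⟩; exact hhinvbij.1 hb.2
      have hSCfin : (S ∩ cset θ q).Finite := hS.inter_of_left _
      have hSCsub : S ∩ cset θ q ⊆ cset θ q := Set.inter_subset_right
      have hclaim4 : hinv '' (cl θ (T ∩ cset θ (Φ q))) = cl θ W :=
        image_cl hhinvcomm hC'closed Set.inter_subset_right
      have hsub' : cl θ (T ∩ cset θ (Φ q)) ⊆ cset θ (Φ q) := by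
        rintro a ⟨t, ⟨_, htq⟩, n, rfl⟩
        exact iter_mem_closed hC'closed htq n
      have hstep : Set.BijOn hinv (cl θ (T ∩ cset θ (Φ q))) (cl θ W) := by
        refine ⟨?_, fun b hb b' hb' e => hhinvbij.2.1 (hsub' hb) (hsub' hb') e, ?_⟩
        · intro b hb
          rw [← hclaim4]; exact ⟨b, hb, rfl⟩
        · intro w hw
          rw [← hclaim4] at hw; exact hw
      have hf2iso : IsoOn θ (cl θ (S ∩ cset θ q)) (cl θ W) (fun a => hinv (f a)) := by
        constructor
        · have hb1 : Set.BijOn f (cl θ (S ∩ cset θ q)) (cl θ (T ∩ cset θ (Φ q))) := by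
            rw [← hgen S q, ← hgen T (Φ q)]; exact hclaim2
          exact hstep.comp hb1
        · intro a ha
          have ha' : a ∈ cl θ S ∩ cset θ q := by rw [hgen S q]; exact ha
          have hfa : f a ∈ cl θ T ∩ cset θ (Φ q) := hclaim2.1 ha'
          show hinv (f (θ a)) = θ (hinv (f a))
          rw [hiso.2 a ha'.1, hhinvcomm _ hfa.2]
      obtain ⟨gC, hgCbij, hgCcomm, hgCext⟩ :=
        hU q.out (S ∩ cset θ q) W hSCfin hWfin hSCsub hWC (fun a => hinv (f a)) hf2iso
      refine ⟨fun a => h (gC a), hhbij.comp hgCbij, ?_, ?_⟩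
      · intro a ha
        show h (gC (θ a)) = θ (h (gC a))
        rw [hgCcomm a ha, hhcomm _ (hgCbij.1 ha)]
      · intro a haS haq
        have ha1 : a ∈ cl θ (S ∩ cset θ q) := by rw [← hgen S q]; exact ⟨haS, haq⟩
        have h5 : gC a = hinv (f a) := hgCext a ha1
        have hfa : f a ∈ cl θ T ∩ cset θ (Φ q) := hclaim2.1 ⟨haS, haq⟩
        show h (gC a) = f a
        rw [h5]
        exact hhinvon.2 hfa.2
    · refine ⟨h, hhbij, hhcomm, ?_⟩
      intro a haS haq
      exfalso
      obtain ⟨s, hs, hcs⟩ := hmemS a haS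
      have h1 : q = Quotient.mk (crel θ) a := eq_mk_of_mem_cset haq
      have h2 : Quotient.mk (crel θ) s = Quotient.mk (crel θ) a := qmk_eq_iff.2 hcs
      exact hq ⟨s, hs, h2.trans h1.symm⟩
  -- glue
  choose G hG1 hG2 hG3 using key
  refine ⟨fun a => G (Quotient.mk (crel θ) a) a, ⟨?_, ?_⟩, ?_, ?_⟩
  · -- injective
    intro a a' e0
    have e : G (Quotient.mk (crel θ) a) a = G (Quotient.mk (crel θ) a') a' := e0
    have h1 : G (Quotient.mk (crel θ) a) a ∈ cset θ (Φ (Quotient.mk (crel θ) a)) :=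
      (hG1 _).1 (mem_cset_mk a)
    have h1' : G (Quotient.mk (crel θ) a') a' ∈ cset θ (Φ (Quotient.mk (crel θ) a')) :=
      (hG1 _).1 (mem_cset_mk a')
    have h2 : Φ (Quotient.mk (crel θ) a) = Φ (Quotient.mk (crel θ) a') := by
      rw [eq_mk_of_mem_cset h1, eq_mk_of_mem_cset h1', e]
    have h3 : Quotient.mk (crel θ) a = Quotient.mk (crel θ) a' := hΦbij.1 h2
    rw [← h3] at e
    exact (hG1 (Quotient.mk (crel θ) a)).2.1 (mem_cset_mk a)
      (by rw [h3]; exact mem_cset_mk a') e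
  · -- surjective
    intro b
    obtain ⟨q, hq⟩ := hΦbij.2 (Quotient.mk (crel θ) b)
    have hb : b ∈ cset θ (Φ q) := by rw [hq]; exact mem_cset_mk b
    obtain ⟨a, ha, he⟩ := (hG1 q).2.2 hb
    have h4 : Quotient.mk (crel θ) a = q := (eq_mk_of_mem_cset ha).symm
    refine ⟨a, ?_⟩
    show G (Quotient.mk (crel θ) a) a = b
    rw [h4]; exact he
  · -- commutes
    intro a
    have h5 : Quotient.mk (crel θ) (θ a) = Quotient.mk (crel θ) a :=
      (qmk_eq_iff.2 (theta_mem_comp a)).symm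
    show G (Quotient.mk (crel θ) (θ a)) (θ a) = θ (G (Quotient.mk (crel θ) a) a)
    rw [h5]
    exact hG2 (Quotient.mk (crel θ) a) a (mem_cset_mk a)
  · -- extends f
    intro a haS
    exact hG3 (Quotient.mk (crel θ) a) a haS (mem_cset_mk a)

end MU

theorem stmt_17 {A : Type*} (θ : A → A) :
    (∀ S T : Set A, S.Finite → T.Finite → ∀ f : A → A,
        IsoOn θ (cl θ S) (cl θ T) f → ExtendsToAuto θ (cl θ S) f)
    ↔ ((∀ x : A, UHOn θ (comp θ x)) ∧
        ∀ x y : A,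
          Cardinal.mk {z | (∃ k ≥ 1, θ^[k] z = z) ∧ z ∈ comp θ x}
            = Cardinal.mk {z | (∃ k ≥ 1, θ^[k] z = z) ∧ z ∈ comp θ y} →
          ∃ f : A → A, Set.BijOn f (comp θ x) (comp θ y) ∧
            ∀ a ∈ comp θ x, f (θ a) = θ (f a)) := by
  constructor
  · intro H
    exact ⟨MU.forward_a H, fun x y hc => MU.forward_b H x y hc⟩
  · rintro ⟨hU, hI⟩ S T hS hT f hiso
    exact MU.backward hU hI hS hT hiso
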